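/- The exp-channel delay function δ↑(T) = τ·ln(1 - e^{-(T + T_p - τ·ln(V_th))/τ}) + T_p - τ·ln(1 - V_th) is strictly increasing and strictly concave on its domain, and lim_{T→∞} δ↑(T) = T_p - τ·ln(1 - V_th). -/

import Mathlib

/-- Rising delay function of an exp-channel. -/
noncomputable def deltaUp (τ Tp Vth T : ℝ) : ℝ :=
  τ * Real.log (1 - Real.exp (-(T + Tp - τ * Real.log Vth) / τ)) +
    Tp - τ * Real.log (1 - Vth)

/-- The exp-channel delay function `δ↑` is strictly increasing and strictly
concave on its domain `{T | 0 < T + Tp - τ·ln Vth}`, and it tends to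
`Tp - τ·ln (1 - Vth)` as `T → ∞`. -/
theorem stmt_8 (τ Tp Vth : ℝ) (hτ : 0 < τ) (hV : Vth ∈ Set.Ioo (0:ℝ) 1) :
    StrictMonoOn (deltaUp τ Tp Vth) {T | 0 < T + Tp - τ * Real.log Vth} ∧
    StrictConcaveOn ℝ {T | 0 < T + Tp - τ * Real.log Vth} (deltaUp τ Tp Vth) ∧
    Filter.Tendsto (deltaUp τ Tp Vth) Filter.atTop
      (nhds (Tp - τ * Real.log (1 - Vth))) := by
  set c : ℝ := τ * Real.log Vth - Tp with hc
  have hSeq : {T : ℝ | 0 < T + Tp - τ * Real.log Vth} = Set.Ioi c := by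
    ext T; simp only [Set.mem_setOf_eq, Set.mem_Ioi, hc]; constructor <;> intro h <;> linarith
  set E : ℝ → ℝ := fun T => Real.exp (-(T + Tp - τ * Real.log Vth) / τ) with hE
  have hEpos : ∀ T, 0 < E T := fun T => Real.exp_pos _
  have hElt1 : ∀ T ∈ Set.Ioi c, E T < 1 := by
    intro T hT
    simp only [Set.mem_Ioi, hc] at hT
    have h0 : -(T + Tp - τ * Real.log Vth) / τ < 0 :=
      div_neg_of_neg_of_pos (by linarith) hτ
    calc E T < Real.exp 0 := Real.exp_lt_exp.2 h0
    _ = 1 := Real.exp_zero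
  have hsub : ∀ T ∈ Set.Ioi c, 0 < 1 - E T := fun T hT => by linarith [hElt1 T hT]
  -- derivative
  have hD : ∀ T ∈ Set.Ioi c, HasDerivAt (deltaUp τ Tp Vth) (E T / (1 - E T)) T := by
    intro T hT
    have h1 : HasDerivAt (fun T : ℝ => -(T + Tp - τ * Real.log Vth) / τ) (-1 / τ) T := by
      simpa using (((hasDerivAt_id T).add_const Tp).sub_const (τ * Real.log Vth)).neg.div_const τ
    have h2 : HasDerivAt E (E T * (-1 / τ)) T := h1.exp
    have h3 : HasDerivAt (fun T => 1 - E T) (-(E T * (-1 / τ))) T := h2.const_sub 1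
    have h4 := h3.log (ne_of_gt (hsub T hT))
    have h5 := ((h4.const_mul τ).add_const Tp).sub_const (τ * Real.log (1 - Vth))
    have hval : τ * (-(E T * (-1 / τ)) / (1 - E T)) = E T / (1 - E T) := by
      field_simp
    rw [hval] at h5
    exact h5
  have hderiv : ∀ T ∈ Set.Ioi c, deriv (deltaUp τ Tp Vth) T = E T / (1 - E T) :=
    fun T hT => (hD T hT).deriv
  have hcont : ContinuousOn (deltaUp τ Tp Vth) (Set.Ioi c) :=
    fun T hT => (hD T hT).differentiableAt.continuousAt.continuousWithinAt
  have hEanti : StrictAntiOn E (Set.Ioi c) := by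
    intro a _ b _ hab
    exact Real.exp_lt_exp.2 (div_lt_div_of_pos_right (by linarith) hτ)
  rw [hSeq]
  refine ⟨?_, ?_, ?_⟩
  · apply strictMonoOn_of_deriv_pos (convex_Ioi c) hcont
    intro T hT
    rw [interior_Ioi] at hT
    rw [hderiv T hT]
    exact div_pos (hEpos T) (hsub T hT)
  · apply StrictAntiOn.strictConcaveOn_of_deriv (convex_Ioi c) hcont
    rw [interior_Ioi]
    intro a ha b hb hab
    rw [hderiv a ha, hderiv b hb]
    rw [div_lt_div_iff₀ (hsub b hb) (hsub a ha)]
    have := hEanti ha hb hab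
    nlinarith [hEpos a, hEpos b]
  · have hlin : Filter.Tendsto (fun T : ℝ => -(T + Tp - τ * Real.log Vth) / τ)
        Filter.atTop Filter.atBot := by
      apply Filter.Tendsto.atBot_div_const hτ
      apply Filter.tendsto_neg_atBot_iff.2
      simpa [sub_eq_add_neg] using Filter.tendsto_atTop_add_const_right Filter.atTop
        (-(τ * Real.log Vth)) (Filter.tendsto_atTop_add_const_right Filter.atTop Tp
          Filter.tendsto_id)
    have hexp : Filter.Tendsto E Filter.atTop (nhds 0) :=
      Real.tendsto_exp_atBot.comp hlin
    have h1 : Filter.Tendsto (fun T => 1 - E T) Filter.atTop (nhds 1) := by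
      simpa using (hexp.const_sub 1)
    have hlog : Filter.Tendsto (fun T => Real.log (1 - E T)) Filter.atTop (nhds 0) := by
      simpa using h1.log one_ne_zero
    have := ((hlog.const_mul τ).add_const Tp).sub_const (τ * Real.log (1 - Vth))
    simp only [mul_zero, zero_add] at this
    exact this
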